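/- Let c ∈ ℂ and R = ℂ[t, t^{-1}, u | u² = t⁴ − 2ct² + 1]. In Ω¹_R/dR the following identities hold: (class of t u dt) = (1/2)(ω_{−3} + c ω_{−1}); (class of t² u dt) = (1/5)ω_{−2} + (4c/5)ω_{−4}; (class of t³ u dt) = (c/2)(ω_{−3} + c ω_{−1}); (class of t⁴ u dt) = ((32c² − 5)/35)ω_{−4} + (8c/35)ω_{−2}; and (class of t⁵ u dt) = ((5c² − 1)/8)(ω_{−3} + c ω_{−1}). -/

import Mathlib

noncomputable section
open Polynomial LaurentPolynomial

/-- The ring `R = ℂ[t,t⁻¹][u]/(u² − (t⁴ − 2ct² + 1))`, realized by adjoining a root `u`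
of `X² − (t⁴ − 2ct² + 1)` to the ring of Laurent polynomials `ℂ[t,t⁻¹]`. -/
abbrev DJKM (c : ℂ) : Type :=
  AdjoinRoot ((X : Polynomial (LaurentPolynomial ℂ)) ^ 2 -
    Polynomial.C (T 4 - 2 * LaurentPolynomial.C c * T 2 + 1))

/-- The element `t^i` of `R`, for `i : ℤ`. -/
def tp (c : ℂ) (i : ℤ) : DJKM c := AdjoinRoot.of _ (T i)

/-- The element `u` of `R`. -/
def uu (c : ℂ) : DJKM c := AdjoinRoot.root _

/-- The subspace `dR ⊆ Ω¹_R` of exact differentials. -/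
def dR (c : ℂ) : Submodule ℂ (KaehlerDifferential ℂ (DJKM c)) :=
  LinearMap.range (KaehlerDifferential.D ℂ (DJKM c)).toLinearMap

/-- The class of `f·dg` in `Ω¹_R/dR`. -/
def cls (c : ℂ) (f g : DJKM c) : KaehlerDifferential ℂ (DJKM c) ⧸ dR c :=
  Submodule.Quotient.mk (f • KaehlerDifferential.D ℂ (DJKM c) g)

/-- `ω_k` : the class of `t^k·u·dt` in `Ω¹_R/dR`. -/
def w (c : ℂ) (k : ℤ) : KaehlerDifferential ℂ (DJKM c) ⧸ dR c :=
  cls c (tp c k * uu c) (tp c 1)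

/-- `ω₀` : the class of `t⁻¹·dt` in `Ω¹_R/dR`. -/
def w0 (c : ℂ) : KaehlerDifferential ℂ (DJKM c) ⧸ dR c :=
  cls c (tp c (-1)) (tp c 1)


set_option maxHeartbeats 1000000
set_option synthInstance.maxHeartbeats 200000

lemma tp_mul (c : ℂ) (i j : ℤ) : tp c i * tp c j = tp c (i+j) := by
  unfold tp; rw [← map_mul, ← T_add]

lemma tp_zero (c : ℂ) : tp c 0 = 1 := by simp [tp, T_zero]

lemma u_sq (c : ℂ) : uu c ^ 2 = tp c 4 - (2*c) • tp c 2 + 1 := by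
  have h := AdjoinRoot.eval₂_root ((X : Polynomial (LaurentPolynomial ℂ)) ^ 2 -
    Polynomial.C (T 4 - 2 * LaurentPolynomial.C c * T 2 + 1))
  simp only [eval₂_sub, eval₂_pow, eval₂_X, Polynomial.eval₂_C, sub_eq_zero] at h
  rw [show (uu c)^2 = AdjoinRoot.root _ ^ 2 from rfl, h]
  rw [map_add, map_sub, map_one, map_mul, map_mul]
  rw [Algebra.smul_def]
  have h2 : (AdjoinRoot.of ((X : Polynomial (LaurentPolynomial ℂ)) ^ 2 -
    Polynomial.C (T 4 - 2 * LaurentPolynomial.C c * T 2 + 1))) 2 = 2 := by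
    simp [map_ofNat]
  have h3 : algebraMap ℂ (DJKM c) (2*c) = 2 * AdjoinRoot.of _ (LaurentPolynomial.C c) := by
    rw [map_mul, map_ofNat]; rfl
  rw [h2, h3]
  unfold tp
  ring

local notation "Dd" c => KaehlerDifferential.D ℂ (DJKM c)

lemma D_tm1 (c : ℂ) : (Dd c) (tp c (-1)) = (-1:ℂ) • tp c (-2) • (Dd c) (tp c 1) := by
  have h1 : tp c 1 * tp c (-1) = 1 := by rw [tp_mul]; norm_num [tp_zero]
  have h0 : (Dd c) (tp c 1 * tp c (-1)) = 0 := by rw [h1]; exact Derivation.map_one_eq_zero _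
  rw [Derivation.leibniz] at h0
  have h2 := congrArg (fun z => tp c (-1) • z) h0
  simp only [smul_add, smul_smul, smul_zero] at h2
  rw [show tp c (-1) * tp c 1 = 1 by rw [tp_mul]; norm_num [tp_zero], one_smul,
    show tp c (-1) * tp c (-1) = tp c (-2) by rw [tp_mul]; norm_num] at h2
  have := eq_neg_of_add_eq_zero_left h2
  rw [this]; module

lemma D_tp (c : ℂ) (i : ℤ) :
    (Dd c) (tp c i) = (i:ℂ) • tp c (i-1) • (Dd c) (tp c 1) := by
  induction i using Int.induction_on with
  | zero => simp [tp_zero]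
  | succ n ih =>
      have h : tp c (n+1) = tp c n * tp c 1 := by rw [tp_mul]
      rw [h, Derivation.leibniz, ih, smul_comm (tp c 1), smul_smul, tp_mul,
        show (1:ℤ)+((n:ℤ)-1) = n by ring, show (n:ℤ)+1-1 = n by ring]
      push_cast
      module
  | pred n ih =>
      have h : tp c (-(n:ℤ)-1) = tp c (-n) * tp c (-1) := by rw [tp_mul]; ring_nf
      rw [h, Derivation.leibniz, ih, D_tm1, smul_comm (tp c (-(n:ℤ))), smul_smul, tp_mul,
        smul_comm (tp c (-1)), smul_smul, tp_mul,
        show (-(n:ℤ))+(-2) = -(n:ℤ)-1-1 by ring, show (-1)+(-(n:ℤ)-1) = -(n:ℤ)-1-1 by ring]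
      push_cast
      module


lemma uDu (c : ℂ) : uu c • (Dd c) (uu c)
    = (2:ℂ) • tp c 3 • (Dd c) (tp c 1) - (2*c) • tp c 1 • (Dd c) (tp c 1) := by
  have h1 : (Dd c) (uu c ^ 2) = (2:ℂ) • (uu c • (Dd c) (uu c)) := by
    simp only [pow_two]; rw [Derivation.leibniz]; match_scalars; simp [map_ofNat]; ring
  have h2 : (Dd c) (uu c ^ 2)
      = (4:ℂ) • tp c 3 • (Dd c) (tp c 1) - (2*c) • ((2:ℂ) • tp c 1 • (Dd c) (tp c 1)) := by
    rw [u_sq]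
    simp only [map_add, map_sub, Derivation.map_smul, Derivation.map_one_eq_zero, add_zero]
    rw [D_tp c 4, D_tp c 2]
    norm_num
  calc uu c • (Dd c) (uu c) = (1/2:ℂ) • ((2:ℂ) • (uu c • (Dd c) (uu c))) := by
        rw [smul_smul]; norm_num
    _ = (1/2:ℂ) • ((4:ℂ) • tp c 3 • (Dd c) (tp c 1)
          - (2*c) • ((2:ℂ) • tp c 1 • (Dd c) (tp c 1))) := by rw [← h1, h2]
    _ = (2:ℂ) • tp c 3 • (Dd c) (tp c 1) - (2*c) • tp c 1 • (Dd c) (tp c 1) := by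
        rw [smul_sub, smul_smul, smul_smul, smul_smul,
          show (1/2:ℂ)*4 = 2 by norm_num, show (1/2:ℂ)*(2*c)*2 = 2*c by ring]

lemma u_cube (c : ℂ) : uu c ^ 3 = tp c 4 * uu c - (2*c) • (tp c 2 * uu c) + uu c := by
  rw [pow_succ, u_sq, add_mul, sub_mul, one_mul, smul_mul_assoc]

lemma hx (c : ℂ) (m : ℤ) : (Dd c) (tp c m * uu c ^ 3)
      = ((m:ℂ)+6) • ((tp c (m-1) * tp c 4 * uu c) • (Dd c) (tp c 1))
        - (2*c*((m:ℂ)+3)) • ((tp c (m-1) * tp c 2 * uu c) • (Dd c) (tp c 1))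
        + (m:ℂ) • ((tp c (m-1) * uu c) • (Dd c) (tp c 1)) := by
  rw [Derivation.leibniz, Derivation.leibniz_pow, D_tp c m, u_cube]
  simp only [show (3:ℕ)-1 = 2 from rfl, pow_two, mul_smul, uDu]
  have hm : tp c (m-1) * tp c 1 = tp c m := by rw [tp_mul]; ring_nf
  have h13 : tp c 1 * tp c 3 = tp c 4 := by rw [tp_mul]; norm_num
  have h11 : tp c 1 * tp c 1 = tp c 2 := by rw [tp_mul]; norm_num
  match_scalars
  simp only [Algebra.smul_def, nsmul_eq_mul, map_intCast, map_ofNat, Nat.cast_ofNat, mul_one]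
  linear_combination (6*uu c*tp c 3 - 6*(algebraMap ℂ (DJKM c) c)*uu c*tp c 1) * hm.symm
    + (6*uu c*tp c (m-1)) * h13 - (6*(algebraMap ℂ (DJKM c) c)*uu c*tp c (m-1)) * h11

lemma key (c : ℂ) (m : ℤ) :
    ((m:ℂ)+6) • w c (m+3) - (2*c*((m:ℂ)+3)) • w c (m+1) + (m:ℂ) • w c (m-1) = 0 := by
  have e3 : tp c (m+3) = tp c (m-1) * tp c 4 := by rw [tp_mul]; ring_nf
  have e1 : tp c (m+1) = tp c (m-1) * tp c 2 := by rw [tp_mul]; ring_nf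
  simp only [w, cls]
  rw [e3, e1]
  rw [← Submodule.Quotient.mk_smul, ← Submodule.Quotient.mk_smul, ← Submodule.Quotient.mk_smul,
    ← Submodule.Quotient.mk_sub, ← Submodule.Quotient.mk_add, Submodule.Quotient.mk_eq_zero]
  exact ⟨tp c m * uu c ^ 3, hx c m⟩


/-- Explicit expressions for the classes of `t^k u dt`, `k = 1,…,5`, in terms of
`ω₋₁, ω₋₂, ω₋₃, ω₋₄`. -/
theorem stmt7 (c : ℂ) :
    w c 1 = (1 / 2 : ℂ) • (w c (-3) + c • w c (-1)) ∧
    w c 2 = (1 / 5 : ℂ) • w c (-2) + (4 * c / 5) • w c (-4) ∧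
    w c 3 = (c / 2) • (w c (-3) + c • w c (-1)) ∧
    w c 4 = ((32 * c ^ 2 - 5) / 35) • w c (-4) + (8 * c / 35) • w c (-2) ∧
    w c 5 = ((5 * c ^ 2 - 1) / 8) • (w c (-3) + c • w c (-1)) := by
  have k3 := key c (-3)
  have k2m := key c (-2)
  have k1m := key c (-1)
  have k0 := key c 0
  have k1 := key c 1
  have k2 := key c 2
  norm_num at k3 k2m k1m k0 k1 k2
  have h0 : w c 0 = w c (-4) := by
    apply smul_right_injective _ (show (3:ℂ) ≠ 0 by norm_num)
    show (3:ℂ) • w c 0 = (3:ℂ) • w c (-4)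
    rw [← sub_eq_zero]
    refine Eq.trans ?_ k3
    module
  rw [h0] at k1m k1
  have h1 : w c 1 = (1 / 2 : ℂ) • (w c (-3) + c • w c (-1)) := by
    apply smul_right_injective _ (show (4:ℂ) ≠ 0 by norm_num)
    show (4:ℂ) • w c 1 = (4:ℂ) • ((1 / 2 : ℂ) • (w c (-3) + c • w c (-1)))
    rw [← sub_eq_zero]
    refine Eq.trans ?_ k2m
    module
  have h2 : w c 2 = (1 / 5 : ℂ) • w c (-2) + (4 * c / 5) • w c (-4) := by
    apply smul_right_injective _ (show (5:ℂ) ≠ 0 by norm_num)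
    show (5:ℂ) • w c 2 = (5:ℂ) • ((1 / 5 : ℂ) • w c (-2) + (4 * c / 5) • w c (-4))
    rw [← sub_eq_zero]
    refine Eq.trans ?_ k1m
    module
  rw [h1] at k0
  have h3 : w c 3 = (c / 2) • (w c (-3) + c • w c (-1)) := by
    apply smul_right_injective _ (show (6:ℂ) ≠ 0 by norm_num)
    show (6:ℂ) • w c 3 = (6:ℂ) • ((c / 2) • (w c (-3) + c • w c (-1)))
    rw [← sub_eq_zero]
    refine Eq.trans ?_ k0
    module
  rw [h2] at k1
  have h4 : w c 4 = ((32 * c ^ 2 - 5) / 35) • w c (-4) + (8 * c / 35) • w c (-2) := by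
    apply smul_right_injective _ (show (7:ℂ) ≠ 0 by norm_num)
    show (7:ℂ) • w c 4
        = (7:ℂ) • (((32 * c ^ 2 - 5) / 35) • w c (-4) + (8 * c / 35) • w c (-2))
    rw [← sub_eq_zero]
    refine Eq.trans ?_ k1
    module
  rw [h3, h1] at k2
  have h5 : w c 5 = ((5 * c ^ 2 - 1) / 8) • (w c (-3) + c • w c (-1)) := by
    apply smul_right_injective _ (show (8:ℂ) ≠ 0 by norm_num)
    show (8:ℂ) • w c 5 = (8:ℂ) • (((5 * c ^ 2 - 1) / 8) • (w c (-3) + c • w c (-1)))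
    rw [← sub_eq_zero]
    refine Eq.trans ?_ k2
    module
  exact ⟨h1, h2, h3, h4, h5⟩
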